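/- Let G ∈ ℝ^{m×k} have orthonormal columns (GᵀG = I), Σ = diag(σ₁,...,σₖ) with σᵢ ≥ 0, and D ∈ ℝ^{k×k} a nonnegative diagonal matrix with entries arranged in an order matching Σ (both nonincreasing). Then for every m×k matrix V⊥ with orthonormal columns, Tr(V⊥ᵀ G Σ² Gᵀ V⊥ D) ≤ Tr(Σ² D), with equality when V⊥ = G. -/

import Mathlib

open Matrix BigOperators

open Finset in
private lemma rsvd_tele (a : ℕ → ℝ) (k i : ℕ) (hik : i < k) (hak : a k = 0) :
    a i = ∑ t ∈ range k, (a t - a (t+1)) * (if i ≤ t then 1 else 0) := by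
  have h1 : ∑ t ∈ range k, (a t - a (t+1)) * (if i ≤ t then 1 else 0)
      = ∑ t ∈ (range k).filter (fun t => i ≤ t), (a t - a (t+1)) := by
    rw [Finset.sum_filter]
    congr 1; ext t; split <;> simp
  have h2 : (range k).filter (fun t => i ≤ t) = Finset.Ico i k := by
    ext t; simp only [Finset.mem_filter, Finset.mem_range, Finset.mem_Ico]; tauto
  rw [h1, h2, Finset.sum_Ico_eq_sub _ hik.le, Finset.sum_range_sub' a,
    Finset.sum_range_sub' a, hak]
  ring

open Finset in
private lemma rsvd_cardsum (k m : ℕ) (hmk : m < k) :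
    ∑ i ∈ range k, (if i ≤ m then (1:ℝ) else 0) = m + 1 := by
  have h2 : (range k).filter (fun i => i ≤ m) = range (m+1) := by
    ext t; simp [Nat.lt_succ_iff]; omega
  rw [Finset.sum_ite, Finset.sum_const, Finset.sum_const_zero, h2]
  simp

open Finset in
private lemma rsvd_substoch (k : ℕ) (a b : ℕ → ℝ) (B : ℕ → ℕ → ℝ)
    (ha : ∀ t, a (t+1) ≤ a t) (hb : ∀ t, b (t+1) ≤ b t)
    (hak : a k = 0) (hbk : b k = 0) (hB0 : ∀ i j, 0 ≤ B i j)
    (hrow : ∀ i, ∑ j ∈ range k, B i j ≤ 1)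
    (hcol : ∀ j, ∑ i ∈ range k, B i j ≤ 1) :
    ∑ i ∈ range k, ∑ j ∈ range k, a i * b j * B i j
      ≤ ∑ i ∈ range k, a i * b i := by
  set χ : ℕ → ℕ → ℝ := fun t i => if i ≤ t then 1 else 0 with hχ
  have hχ0 : ∀ t i, 0 ≤ χ t i := by intro t i; simp only [hχ]; split <;> norm_num
  have hχ1 : ∀ t i, χ t i ≤ 1 := by intro t i; simp only [hχ]; split <;> norm_num
  have swap4 : ∀ F : ℕ → ℕ → ℕ → ℕ → ℝ,
      ∑ i ∈ range k, ∑ j ∈ range k, ∑ t ∈ range k, ∑ s ∈ range k, F i j t s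
      = ∑ t ∈ range k, ∑ s ∈ range k, ∑ i ∈ range k, ∑ j ∈ range k, F i j t s := by
    intro F
    calc ∑ i ∈ range k, ∑ j ∈ range k, ∑ t ∈ range k, ∑ s ∈ range k, F i j t s
        = ∑ i ∈ range k, ∑ t ∈ range k, ∑ j ∈ range k, ∑ s ∈ range k, F i j t s := by
          exact Finset.sum_congr rfl fun i _ => Finset.sum_comm
      _ = ∑ t ∈ range k, ∑ i ∈ range k, ∑ j ∈ range k, ∑ s ∈ range k, F i j t s :=
          Finset.sum_comm
      _ = ∑ t ∈ range k, ∑ i ∈ range k, ∑ s ∈ range k, ∑ j ∈ range k, F i j t s :=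
          Finset.sum_congr rfl fun t _ => Finset.sum_congr rfl fun i _ => Finset.sum_comm
      _ = ∑ t ∈ range k, ∑ s ∈ range k, ∑ i ∈ range k, ∑ j ∈ range k, F i j t s :=
          Finset.sum_congr rfl fun t _ => Finset.sum_comm
  have hL : ∑ i ∈ range k, ∑ j ∈ range k, a i * b j * B i j
      = ∑ t ∈ range k, ∑ s ∈ range k, (a t - a (t+1)) * (b s - b (s+1)) *
          (∑ i ∈ range k, ∑ j ∈ range k, χ t i * χ s j * B i j) := by
    have step : ∑ i ∈ range k, ∑ j ∈ range k, a i * b j * B i j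
        = ∑ i ∈ range k, ∑ j ∈ range k, ∑ t ∈ range k, ∑ s ∈ range k,
            (a t - a (t+1)) * (b s - b (s+1)) * (χ t i * χ s j * B i j) := by
      refine Finset.sum_congr rfl fun i hi => Finset.sum_congr rfl fun j hj => ?_
      rw [rsvd_tele a k i (mem_range.mp hi) hak, rsvd_tele b k j (mem_range.mp hj) hbk,
        Finset.sum_mul, Finset.sum_mul]
      refine Finset.sum_congr rfl fun t _ => ?_
      rw [mul_right_comm, Finset.mul_sum]
      exact Finset.sum_congr rfl fun s _ => by ring
    rw [step, swap4]
    refine Finset.sum_congr rfl fun t _ => Finset.sum_congr rfl fun s _ => ?_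
    rw [Finset.mul_sum]
    refine Finset.sum_congr rfl fun i _ => ?_
    rw [Finset.mul_sum]
  have hR : ∑ i ∈ range k, a i * b i
      = ∑ t ∈ range k, ∑ s ∈ range k, (a t - a (t+1)) * (b s - b (s+1)) *
          (((min t s : ℕ) : ℝ) + 1) := by
    have step : ∑ i ∈ range k, a i * b i
        = ∑ i ∈ range k, ∑ t ∈ range k, ∑ s ∈ range k,
            (a t - a (t+1)) * (b s - b (s+1)) * (χ t i * χ s i) := by
      refine Finset.sum_congr rfl fun i hi => ?_
      rw [rsvd_tele a k i (mem_range.mp hi) hak, rsvd_tele b k i (mem_range.mp hi) hbk,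
        Finset.sum_mul]
      refine Finset.sum_congr rfl fun t _ => ?_
      rw [Finset.mul_sum]
      refine Finset.sum_congr rfl fun s _ => ?_
      ring
    have swap3 : ∑ i ∈ range k, ∑ t ∈ range k, ∑ s ∈ range k,
          (a t - a (t+1)) * (b s - b (s+1)) * (χ t i * χ s i)
        = ∑ t ∈ range k, ∑ s ∈ range k, ∑ i ∈ range k,
            (a t - a (t+1)) * (b s - b (s+1)) * (χ t i * χ s i) := by
      rw [Finset.sum_comm]
      exact Finset.sum_congr rfl fun t _ => Finset.sum_comm
    rw [step, swap3]
    refine Finset.sum_congr rfl fun t ht => Finset.sum_congr rfl fun s hs => ?_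
    rw [← Finset.mul_sum]
    congr 1
    have hmin : ∀ i, χ t i * χ s i = χ (min t s) i := by
      intro i; simp only [hχ, le_min_iff]
      by_cases h1 : i ≤ t <;> by_cases h2 : i ≤ s <;> simp [h1, h2]
    simp_rw [hmin]
    exact rsvd_cardsum k (min t s) (lt_of_le_of_lt (min_le_left t s) (mem_range.mp ht))
  rw [hL, hR]
  refine Finset.sum_le_sum fun t ht => Finset.sum_le_sum fun s hs => ?_
  have hΔa : 0 ≤ a t - a (t+1) := sub_nonneg.mpr (ha t)
  have hΔb : 0 ≤ b s - b (s+1) := sub_nonneg.mpr (hb s)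
  refine mul_le_mul_of_nonneg_left ?_ (mul_nonneg hΔa hΔb)
  have bound1 : ∑ i ∈ range k, ∑ j ∈ range k, χ t i * χ s j * B i j ≤ (t : ℝ) + 1 := by
    calc ∑ i ∈ range k, ∑ j ∈ range k, χ t i * χ s j * B i j
        ≤ ∑ i ∈ range k, χ t i := by
          refine Finset.sum_le_sum fun i _ => ?_
          have : ∑ j ∈ range k, χ t i * χ s j * B i j
              = χ t i * ∑ j ∈ range k, χ s j * B i j := by
            rw [Finset.mul_sum]; exact Finset.sum_congr rfl fun j _ => by ring
          rw [this]
          have hin : ∑ j ∈ range k, χ s j * B i j ≤ 1 := by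
            refine le_trans (Finset.sum_le_sum fun j _ => ?_) (hrow i)
            calc χ s j * B i j ≤ 1 * B i j :=
                  mul_le_mul_of_nonneg_right (hχ1 s j) (hB0 i j)
              _ = B i j := one_mul _
          calc χ t i * ∑ j ∈ range k, χ s j * B i j ≤ χ t i * 1 :=
                mul_le_mul_of_nonneg_left hin (hχ0 t i)
            _ = χ t i := mul_one _
      _ = (t : ℝ) + 1 := rsvd_cardsum k t (mem_range.mp ht)
  have bound2 : ∑ i ∈ range k, ∑ j ∈ range k, χ t i * χ s j * B i j ≤ (s : ℝ) + 1 := by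
    rw [Finset.sum_comm]
    calc ∑ j ∈ range k, ∑ i ∈ range k, χ t i * χ s j * B i j
        ≤ ∑ j ∈ range k, χ s j := by
          refine Finset.sum_le_sum fun j _ => ?_
          have : ∑ i ∈ range k, χ t i * χ s j * B i j
              = χ s j * ∑ i ∈ range k, χ t i * B i j := by
            rw [Finset.mul_sum]; exact Finset.sum_congr rfl fun i _ => by ring
          rw [this]
          have hin : ∑ i ∈ range k, χ t i * B i j ≤ 1 := by
            refine le_trans (Finset.sum_le_sum fun i _ => ?_) (hcol j)
            calc χ t i * B i j ≤ 1 * B i j :=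
                  mul_le_mul_of_nonneg_right (hχ1 t i) (hB0 i j)
              _ = B i j := one_mul _
          calc χ s j * ∑ i ∈ range k, χ t i * B i j ≤ χ s j * 1 :=
                mul_le_mul_of_nonneg_left hin (hχ0 s j)
            _ = χ s j := mul_one _
      _ = (s : ℝ) + 1 := rsvd_cardsum k s (mem_range.mp hs)
  rcases le_total t s with h | h
  · rw [min_eq_left h]; exact bound1
  · rw [min_eq_right h]; exact bound2

private lemma rsvd_rowbound {m k : ℕ} (G Vp : Matrix (Fin m) (Fin k) ℝ)
    (hG : Gᵀ * G = 1) (hVp : Vpᵀ * Vp = 1) :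
    ∀ i, ∑ j : Fin k, ((Gᵀ * Vp) i j)^2 ≤ 1 := by
  intro i
  set M := Gᵀ * Vp with hM
  set N := G - Vp * (Vpᵀ * G) with hN
  have hmid : ∀ (X : Matrix (Fin m) (Fin k) ℝ), Vpᵀ * (Vp * (Vpᵀ * X)) = Vpᵀ * X := by
    intro X; rw [← Matrix.mul_assoc Vpᵀ Vp, hVp, Matrix.one_mul]
  have key : Nᵀ * N = 1 - M * Mᵀ := by
    have hMMt : M * Mᵀ = Gᵀ * (Vp * (Vpᵀ * G)) := by
      simp only [hM, Matrix.transpose_mul, Matrix.transpose_transpose, Matrix.mul_assoc]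
    rw [hMMt]
    simp only [hN, hM, Matrix.transpose_sub, Matrix.transpose_mul, Matrix.transpose_transpose,
      Matrix.sub_mul, Matrix.mul_sub, Matrix.mul_assoc, hmid, hG]
    abel
  have h1 : (0:ℝ) ≤ (Nᵀ * N) i i := by
    rw [Matrix.mul_apply]
    refine Finset.sum_nonneg fun l _ => ?_
    simp only [Matrix.transpose_apply]
    exact mul_self_nonneg _
  rw [key] at h1
  have h2 : (M * Mᵀ) i i = ∑ j : Fin k, (M i j)^2 := by
    rw [Matrix.mul_apply]
    exact Finset.sum_congr rfl fun j _ => by rw [Matrix.transpose_apply, sq]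
  have h3 : ((1 : Matrix (Fin k) (Fin k) ℝ) - M * Mᵀ) i i = 1 - (M * Mᵀ) i i := by
    simp [Matrix.sub_apply, Matrix.one_apply]
  rw [h3, h2] at h1
  linarith

/-- Key lemma for the RSVD subspace result: for orthonormal-column G and V⊥,
    diagonal Σ (nonneg, nonincreasing) and diagonal D (nonneg, matching order),
    Tr(V⊥ᵀ G Σ² Gᵀ V⊥ D) ≤ Tr(Σ² D), with equality when V⊥ = G. -/
theorem rsvd_subspace_trace_bound {m k : ℕ}
    (G : Matrix (Fin m) (Fin k) ℝ) (hG : Gᵀ * G = 1)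
    (σ d : Fin k → ℝ) (hσ : ∀ i, 0 ≤ σ i) (hd : ∀ i, 0 ≤ d i)
    (hσmono : Antitone σ) (hdmono : Antitone d) :
    (∀ Vp : Matrix (Fin m) (Fin k) ℝ, Vpᵀ * Vp = 1 →
      Matrix.trace (Vpᵀ * G * Matrix.diagonal (fun i => (σ i)^2) * Gᵀ * Vp *
          Matrix.diagonal d)
        ≤ Matrix.trace (Matrix.diagonal (fun i => (σ i)^2) * Matrix.diagonal d)) ∧
    Matrix.trace (Gᵀ * G * Matrix.diagonal (fun i => (σ i)^2) * Gᵀ * G *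
        Matrix.diagonal d)
      = Matrix.trace (Matrix.diagonal (fun i => (σ i)^2) * Matrix.diagonal d) := by
  have htrSD : Matrix.trace (Matrix.diagonal (fun i => (σ i)^2) * Matrix.diagonal d)
      = ∑ i : Fin k, (σ i)^2 * d i := by
    rw [Matrix.diagonal_mul_diagonal, Matrix.trace_diagonal]
  constructor
  · intro Vp hVp
    set M := Gᵀ * Vp with hM
    -- trace as a double sum
    have hLHS : Matrix.trace (Vpᵀ * G * Matrix.diagonal (fun i => (σ i)^2) * Gᵀ * Vp *
          Matrix.diagonal d)
        = ∑ j : Fin k, ∑ i : Fin k, (σ i)^2 * d j * (M i j)^2 := by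
      have hVG : Vpᵀ * G = Mᵀ := by
        rw [hM, Matrix.transpose_mul, Matrix.transpose_transpose]
      rw [hVG, Matrix.mul_assoc (Mᵀ * Matrix.diagonal (fun i => (σ i)^2)) Gᵀ Vp, ← hM]
      rw [Matrix.trace]
      refine Finset.sum_congr rfl fun j _ => ?_
      rw [Matrix.diag_apply, Matrix.mul_diagonal, Matrix.mul_apply, Finset.sum_mul]
      refine Finset.sum_congr rfl fun i _ => ?_
      rw [Matrix.mul_diagonal, Matrix.transpose_apply, sq]
      ring
    -- ℕ-indexed data
    set a : ℕ → ℝ := fun n => if h : n < k then (σ ⟨n, h⟩)^2 else 0 with ha_def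
    set b : ℕ → ℝ := fun n => if h : n < k then d ⟨n, h⟩ else 0 with hb_def
    set Bn : ℕ → ℕ → ℝ :=
      fun i j => if h : i < k ∧ j < k then (M ⟨i, h.1⟩ ⟨j, h.2⟩)^2 else 0 with hBn_def
    have ha : ∀ t, a (t+1) ≤ a t := by
      intro t
      by_cases h1 : t + 1 < k
      · have h2 : t < k := by omega
        simp only [ha_def, dif_pos h1, dif_pos h2]
        have hle : (⟨t, h2⟩ : Fin k) ≤ ⟨t+1, h1⟩ := by
          simp [Fin.mk_le_mk]
        exact pow_le_pow_left₀ (hσ _) (hσmono hle) 2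
      · simp only [ha_def, dif_neg h1]
        by_cases h2 : t < k
        · simp only [dif_pos h2]; positivity
        · simp [dif_neg h2]
    have hb : ∀ t, b (t+1) ≤ b t := by
      intro t
      by_cases h1 : t + 1 < k
      · have h2 : t < k := by omega
        simp only [hb_def, dif_pos h1, dif_pos h2]
        have hle : (⟨t, h2⟩ : Fin k) ≤ ⟨t+1, h1⟩ := by
          simp [Fin.mk_le_mk]
        exact hdmono hle
      · simp only [hb_def, dif_neg h1]
        by_cases h2 : t < k
        · simp only [dif_pos h2]; exact hd _
        · simp [dif_neg h2]
    have hak : a k = 0 := dif_neg (lt_irrefl k)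
    have hbk : b k = 0 := dif_neg (lt_irrefl k)
    have hB0 : ∀ i j, 0 ≤ Bn i j := by
      intro i j
      simp only [hBn_def]
      split
      · exact sq_nonneg _
      · exact le_refl 0
    have hrow : ∀ i, ∑ j ∈ Finset.range k, Bn i j ≤ 1 := by
      intro i
      by_cases hi : i < k
      · have heq : ∑ j ∈ Finset.range k, Bn i j
            = ∑ j : Fin k, (M ⟨i, hi⟩ j)^2 := by
          rw [← Fin.sum_univ_eq_sum_range (fun j => Bn i j) k]
          refine Finset.sum_congr rfl fun j _ => ?_
          simp [hBn_def, hi, j.isLt]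
        rw [heq]
        exact rsvd_rowbound G Vp hG hVp ⟨i, hi⟩
      · have : ∀ j ∈ Finset.range k, Bn i j = 0 := by
          intro j _; simp [hBn_def, hi]
        rw [Finset.sum_eq_zero this]; norm_num
    have hcol : ∀ j, ∑ i ∈ Finset.range k, Bn i j ≤ 1 := by
      intro j
      by_cases hj : j < k
      · have hcolb := rsvd_rowbound Vp G hVp hG ⟨j, hj⟩
        have heq : ∑ i ∈ Finset.range k, Bn i j
            = ∑ i : Fin k, ((Vpᵀ * G) ⟨j, hj⟩ i)^2 := by
          rw [← Fin.sum_univ_eq_sum_range (fun i => Bn i j) k]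
          refine Finset.sum_congr rfl fun i _ => ?_
          have hentry : (Vpᵀ * G) ⟨j, hj⟩ i = M i ⟨j, hj⟩ := by
            rw [hM, Matrix.mul_apply, Matrix.mul_apply]
            exact Finset.sum_congr rfl fun l _ => by
              rw [Matrix.transpose_apply, Matrix.transpose_apply]; ring
          rw [hentry]
          simp [hBn_def, hj, i.isLt]
        rw [heq]
        exact hcolb
      · have : ∀ i ∈ Finset.range k, Bn i j = 0 := by
          intro i _; simp [hBn_def, hj]
        rw [Finset.sum_eq_zero this]; norm_num
    have conv1 : ∑ j : Fin k, ∑ i : Fin k, (σ i)^2 * d j * (M i j)^2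
        = ∑ j ∈ Finset.range k, ∑ i ∈ Finset.range k, a i * b j * Bn i j := by
      rw [← Fin.sum_univ_eq_sum_range
        (fun jn => ∑ i ∈ Finset.range k, a i * b jn * Bn i jn) k]
      refine Finset.sum_congr rfl fun j _ => ?_
      rw [← Fin.sum_univ_eq_sum_range (fun i => a i * b (j : ℕ) * Bn i (j : ℕ)) k]
      refine Finset.sum_congr rfl fun i _ => ?_
      simp [ha_def, hb_def, hBn_def, i.isLt, j.isLt]
    have conv2 : ∑ i ∈ Finset.range k, a i * b i = ∑ i : Fin k, (σ i)^2 * d i := by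
      rw [← Fin.sum_univ_eq_sum_range (fun i => a i * b i) k]
      refine Finset.sum_congr rfl fun i _ => ?_
      simp [ha_def, hb_def, i.isLt]
    rw [hLHS, htrSD, conv1, ← conv2, Finset.sum_comm]
    exact rsvd_substoch k a b Bn ha hb hak hbk hB0 hrow hcol
  · rw [hG, Matrix.one_mul,
      Matrix.mul_assoc (Matrix.diagonal (fun i => (σ i)^2)) Gᵀ G, hG, Matrix.mul_one]
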